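/- With V, I₁, I₂, I₃ and Φ = Σ I_k ⊗ I_k as above, a 2-form ω lies in the 3-eigenspace of Φ if and only if ω is of type (1,1) with respect to all complex structures I_a, a ∈ S²; i.e. ω(I_a v, I_a w) = ω(v, w) for all unit vectors a ∈ ℝ³ and all v, w ∈ V. -/
import Mathlib


/-- The endomorphism Φ = Σ Iₖ ⊗ Iₖ of the space of (bilinear) 2-forms on V. -/
noncomputable def quatPhi {V : Type*} [AddCommGroup V] [Module ℝ V] (I₁ I₂ I₃ : V →ₗ[ℝ] V)
    (ω : V →ₗ[ℝ] V →ₗ[ℝ] ℝ) : V →ₗ[ℝ] V →ₗ[ℝ] ℝ :=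
  ω.compl₁₂ I₁ I₁ + ω.compl₁₂ I₂ I₂ + ω.compl₁₂ I₃ I₃

/-- A 2-form ω lies in the 3-eigenspace of Φ = Σ Iₖ ⊗ Iₖ if and only if ω is of type
(1,1) with respect to all the complex structures Iₐ = a₁I₁ + a₂I₂ + a₃I₃, a ∈ S²,
i.e. ω(Iₐ v, Iₐ w) = ω(v, w) for all unit a ∈ ℝ³ and all v, w ∈ V. -/
theorem mem_three_eigenspace_iff_type_one_one {V : Type*} [AddCommGroup V] [Module ℝ V]
    (I₁ I₂ I₃ : V →ₗ[ℝ] V)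
    (h1 : ∀ v, I₁ (I₁ v) = -v) (h2 : ∀ v, I₂ (I₂ v) = -v) (h3 : ∀ v, I₃ (I₃ v) = -v)
    (h12 : ∀ v, I₁ (I₂ v) = I₃ v) (h23 : ∀ v, I₂ (I₃ v) = I₁ v) (h31 : ∀ v, I₃ (I₁ v) = I₂ v)
    (h21 : ∀ v, I₂ (I₁ v) = -I₃ v) (h32 : ∀ v, I₃ (I₂ v) = -I₁ v)
    (h13 : ∀ v, I₁ (I₃ v) = -I₂ v)
    (ω : V →ₗ[ℝ] V →ₗ[ℝ] ℝ) :
    quatPhi I₁ I₂ I₃ ω = (3 : ℝ) • ω ↔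
      ∀ a₁ a₂ a₃ : ℝ, a₁ ^ 2 + a₂ ^ 2 + a₃ ^ 2 = 1 →
        ∀ v w, ω ((a₁ • I₁ + a₂ • I₂ + a₃ • I₃) v) ((a₁ • I₁ + a₂ • I₂ + a₃ • I₃) w)
          = ω v w := by
  constructor
  · intro h a₁ a₂ a₃ ha v w
    have key : ∀ v w, ω (I₁ v) (I₁ w) + ω (I₂ v) (I₂ w) + ω (I₃ v) (I₃ w)
        = 3 * ω v w := by
      intro v w
      have h' := congrArg (fun f => f v w) h
      simpa [quatPhi] using h'
    have A1 : ∀ v w, ω (I₁ v) (I₁ w) = ω v w := by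
      intro v w
      have k1 := key v w
      have k2 := key (I₁ v) (I₁ w)
      simp only [h1, h21, h31, map_neg, LinearMap.neg_apply, neg_neg] at k2
      linarith
    have A2 : ∀ v w, ω (I₂ v) (I₂ w) = ω v w := by
      intro v w
      have k1 := key v w
      have k2 := key (I₂ v) (I₂ w)
      simp only [h2, h12, h32, map_neg, LinearMap.neg_apply, neg_neg] at k2
      linarith
    have A3 : ∀ v w, ω (I₃ v) (I₃ w) = ω v w := by
      intro v w
      have k1 := key v w
      have k2 := key (I₃ v) (I₃ w)
      simp only [h3, h13, h23, map_neg, LinearMap.neg_apply, neg_neg] at k2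
      linarith
    have s12 : ∀ v w, ω (I₁ v) (I₂ w) + ω (I₂ v) (I₁ w) = 0 := by
      intro v w
      have hB := A2 (I₃ v) w
      have hA := A1 (I₃ v) w
      rw [h23] at hB
      rw [h13] at hA
      simp only [map_neg, LinearMap.neg_apply] at hA
      linarith
    have s23 : ∀ v w, ω (I₂ v) (I₃ w) + ω (I₃ v) (I₂ w) = 0 := by
      intro v w
      have hB := A3 (I₁ v) w
      have hA := A2 (I₁ v) w
      rw [h31] at hB
      rw [h21] at hA
      simp only [map_neg, LinearMap.neg_apply] at hA
      linarith
    have s13 : ∀ v w, ω (I₁ v) (I₃ w) + ω (I₃ v) (I₁ w) = 0 := by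
      intro v w
      have hB := A1 (I₂ v) w
      have hA := A3 (I₂ v) w
      rw [h12] at hB
      rw [h32] at hA
      simp only [map_neg, LinearMap.neg_apply] at hA
      linarith
    simp only [LinearMap.add_apply, LinearMap.smul_apply, map_add, map_smul,
      smul_eq_mul]
    linear_combination a₁ ^ 2 * A1 v w + a₂ ^ 2 * A2 v w + a₃ ^ 2 * A3 v w
      + a₁ * a₂ * s12 v w + a₁ * a₃ * s13 v w + a₂ * a₃ * s23 v w
      + ω v w * ha
  · intro h
    ext v w
    have e1 := h 1 0 0 (by norm_num) v w
    have e2 := h 0 1 0 (by norm_num) v w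
    have e3 := h 0 0 1 (by norm_num) v w
    simp only [LinearMap.add_apply, LinearMap.smul_apply, one_smul, zero_smul,
      add_zero, zero_add] at e1 e2 e3
    simp only [quatPhi, LinearMap.add_apply, LinearMap.compl₁₂_apply,
      LinearMap.smul_apply, smul_eq_mul]
    linarith
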